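/- For any nonzero μ ∈ span(α₀,...,α₄) ⊂ 𝔽₂^{10} with μ ≠ α₀+α₁+α₂+α₃+α₄, the total number of occurrences of μ as a nonzero element across the ten 4-dimensional subspaces V_{ij} (each counted with multiplicity 8 per containment) is 48 if μ is of the form α_k, α_k + α_{k+2}, or α_{k+2} + α_{k+3} + α_{k+4} (indices mod 5), and 32 otherwise. -/

import Mathlib

/-- Basis vectors `α₀, …, α₄` of the first summand of `𝔽₂^{10}`. -/
noncomputable def alphaV (i : Fin 5) : (Fin 5 ⊕ Fin 5) → ZMod 2 :=
  Pi.single (Sum.inl i) 1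

/-- The ten 4-dimensional subspaces `V_{ij}`. -/
noncomputable def Vij (i : Fin 5) : Fin 2 → Submodule (ZMod 2) ((Fin 5 ⊕ Fin 5) → ZMod 2)
  | 0 => Submodule.span (ZMod 2)
      {alphaV i, alphaV (i - 1), alphaV (i + 1), alphaV (i + 2)}
  | 1 => Submodule.span (ZMod 2)
      {alphaV i, alphaV (i - 1) + alphaV (i + 1), alphaV (i + 2),
        alphaV (i + 1) + alphaV (i + 3)}

open scoped Classical

lemma alphaV_inl (a b : Fin 5) : alphaV b (Sum.inl a) = if a = b then 1 else 0 := by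
  simp [alphaV, Pi.single_apply]

lemma alphaV_inr (b : Fin 5) (j : Fin 5) : alphaV b (Sum.inr j) = 0 := by
  simp [alphaV, Pi.single_apply]

noncomputable def condSub (i : Fin 5) : Fin 2 → Submodule (ZMod 2) ((Fin 5 ⊕ Fin 5) → ZMod 2)
  | 0 =>
    { carrier := {v | (∀ j, v (Sum.inr j) = 0) ∧ v (Sum.inl (i + 3)) = 0}
      add_mem' := fun ha hb => ⟨fun j => by simp [ha.1 j, hb.1 j], by simp [ha.2, hb.2]⟩
      zero_mem' := ⟨fun _ => rfl, rfl⟩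
      smul_mem' := fun c v hv => ⟨fun j => by simp [hv.1 j], by simp [hv.2]⟩ }
  | 1 =>
    { carrier := {v | (∀ j, v (Sum.inr j) = 0) ∧
        v (Sum.inl (i - 1)) + v (Sum.inl (i + 1)) + v (Sum.inl (i + 3)) = 0}
      add_mem' := fun ha hb => ⟨fun j => by simp [ha.1 j, hb.1 j], by
        have h1 := ha.2; have h2 := hb.2
        simp only [Pi.add_apply]
        linear_combination h1 + h2⟩
      zero_mem' := ⟨fun _ => rfl, by simp⟩
      smul_mem' := fun c v hv => ⟨fun j => by simp [hv.1 j], by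
        have := hv.2
        simp only [Pi.smul_apply, smul_eq_mul]
        linear_combination c * this⟩ }

lemma zmod2_solve : ∀ x y z : ZMod 2, x + y + z = 0 → y = x + z := by decide

lemma fin5_cases : ∀ d : Fin 5, d = 0 ∨ d = 1 ∨ d = 2 ∨ d = 3 ∨ d = 4 := by decide

lemma sub_one_eq (i : Fin 5) : i - 1 = i + 4 := by revert i; decide

lemma mem_Vij_iff (i : Fin 5) (j : Fin 2) (v : (Fin 5 ⊕ Fin 5) → ZMod 2) :
    v ∈ Vij i j ↔ v ∈ condSub i j := by
  constructor
  · intro hv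
    fin_cases j
    · refine Submodule.span_le.2 ?_ hv
      intro x hx
      simp only [Set.mem_insert_iff, Set.mem_singleton_iff] at hx
      rcases hx with rfl | rfl | rfl | rfl <;>
        exact ⟨fun j => alphaV_inr _ _, by rw [alphaV_inl]; fin_cases i <;> decide⟩
    · refine Submodule.span_le.2 ?_ hv
      intro x hx
      simp only [Set.mem_insert_iff, Set.mem_singleton_iff] at hx
      rcases hx with rfl | rfl | rfl | rfl <;>
        refine ⟨fun j => by simp [alphaV_inr], ?_⟩ <;>
        simp only [Pi.add_apply, alphaV_inl] <;> fin_cases i <;> decide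
  · intro hv
    fin_cases j
    · obtain ⟨hr, h3⟩ := hv
      have hv' : v = v (Sum.inl i) • alphaV i + v (Sum.inl (i-1)) • alphaV (i-1)
          + v (Sum.inl (i+1)) • alphaV (i+1) + v (Sum.inl (i+2)) • alphaV (i+2) := by
        funext x
        cases x with
        | inr j => simp [alphaV_inr, hr j]
        | inl a =>
          simp only [Pi.add_apply, Pi.smul_apply, alphaV_inl, smul_eq_mul, sub_one_eq]
          have ha : i + (a - i) = a := add_sub_cancel i a
          rcases fin5_cases (a - i) with h | h | h | h | h <;> rw [h] at ha <;>
            rw [← ha] <;>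
            simp only [add_right_inj, add_eq_left, add_zero, Fin.reduceEq,
              if_true, if_false, reduceIte, add_zero, zero_add] <;>
            simp_all
      rw [hv', sub_one_eq]
      have h1 : alphaV (i - 1) = alphaV (i + 4) := by rw [sub_one_eq]
      refine add_mem (add_mem (add_mem ?_ ?_) ?_) ?_ <;>
        refine Submodule.smul_mem _ _ (Submodule.subset_span ?_) <;>
        simp [h1]
    · obtain ⟨hr, h3⟩ := hv
      rw [sub_one_eq] at h3
      have hv' : v = v (Sum.inl i) • alphaV i
          + v (Sum.inl (i+4)) • (alphaV (i-1) + alphaV (i+1))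
          + v (Sum.inl (i+2)) • alphaV (i+2)
          + v (Sum.inl (i+3)) • (alphaV (i+1) + alphaV (i+3)) := by
        funext x
        cases x with
        | inr j => simp [alphaV_inr, hr j]
        | inl a =>
          simp only [Pi.add_apply, Pi.smul_apply, alphaV_inl, smul_eq_mul, sub_one_eq]
          have ha : i + (a - i) = a := add_sub_cancel i a
          rcases fin5_cases (a - i) with h | h | h | h | h <;> rw [h] at ha <;>
            rw [← ha] <;>
            simp only [add_right_inj, add_eq_left, add_zero, Fin.reduceEq,
              if_true, if_false, reduceIte, add_zero, zero_add, mul_one, mul_zero,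
              one_mul] <;>
            first
              | (exact zmod2_solve _ _ _ h3)
              | simp_all
      rw [hv']
      refine add_mem (add_mem (add_mem ?_ ?_) ?_) ?_ <;>
        refine Submodule.smul_mem _ _ (Submodule.subset_span ?_) <;>
        simp

def g1 (k : Fin 5) : Fin 5 → ZMod 2 := fun a => if a = k then 1 else 0
def g2 (k : Fin 5) : Fin 5 → ZMod 2 := fun a => g1 k a + g1 (k + 2) a
def g3 (k : Fin 5) : Fin 5 → ZMod 2 :=
  fun a => g1 (k + 2) a + g1 (k + 3) a + g1 (k + 4) a

lemma key : ∀ f : Fin 5 → ZMod 2, f ≠ 0 → f ≠ (fun _ => 1) →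
    (∑ p : Fin 5 × Fin 2, if (if p.2 = 0 then f (p.1 + 3) = 0
        else f (p.1 + 4) + f (p.1 + 1) + f (p.1 + 3) = 0) then (8 : ℕ) else 0)
      = if (∃ k : Fin 5, f = g1 k ∨ f = g2 k ∨ f = g3 k) then 48 else 32 := by
  decide

noncomputable def Zsub : Submodule (ZMod 2) ((Fin 5 ⊕ Fin 5) → ZMod 2) where
  carrier := {v | ∀ j, v (Sum.inr j) = 0}
  zero_mem' := fun _ => rfl
  add_mem' := fun ha hb j => by simp [ha j, hb j]
  smul_mem' := fun c v hv j => by simp [hv j]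

lemma eq_iff_comp (v w : (Fin 5 ⊕ Fin 5) → ZMod 2)
    (hv : ∀ j, v (Sum.inr j) = 0) (hw : ∀ j, w (Sum.inr j) = 0) :
    v = w ↔ (fun a => v (Sum.inl a)) = (fun a => w (Sum.inl a)) := by
  constructor
  · rintro rfl; rfl
  · intro h
    funext x
    cases x with
    | inl a => exact congrFun h a
    | inr j => rw [hv j, hw j]

/-- For nonzero `μ ∈ span(α₀,…,α₄)` with `μ ≠ α₀+α₁+α₂+α₃+α₄`, the total number
of occurrences of `μ` across the ten subspaces `V_{ij}` (counted with
multiplicity 8 per containment) is 48 if `μ` is of the form `α_k`,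
`α_k + α_{k+2}`, or `α_{k+2} + α_{k+3} + α_{k+4}` (indices mod 5), and 32
otherwise. -/
theorem stmt_8 (μ : (Fin 5 ⊕ Fin 5) → ZMod 2)
    (hμ : μ ∈ Submodule.span (ZMod 2) (Set.range alphaV))
    (hne0 : μ ≠ 0) (hnesum : μ ≠ ∑ i : Fin 5, alphaV i) :
    (∑ p : Fin 5 × Fin 2, if μ ∈ Vij p.1 p.2 then (8 : ℕ) else 0)
      = if (∃ k : Fin 5, μ = alphaV k ∨ μ = alphaV k + alphaV (k + 2) ∨
            μ = alphaV (k + 2) + alphaV (k + 3) + alphaV (k + 4))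
        then 48 else 32 := by
  have hz : ∀ j, μ (Sum.inr j) = 0 := by
    have : μ ∈ Zsub := Submodule.span_le.2 (by
      rintro x ⟨k, rfl⟩; exact fun j => alphaV_inr _ _) hμ
    exact this
  set f : Fin 5 → ZMod 2 := fun a => μ (Sum.inl a) with hfdef
  have hf0 : f ≠ 0 := by
    intro h
    exact hne0 (funext fun x => by
      cases x with
      | inl a => exact congrFun h a
      | inr j => exact hz j)
  have hsum_inl : ∀ a, (∑ i : Fin 5, alphaV i) (Sum.inl a) = 1 := by
    intro a
    simp [Finset.sum_apply, alphaV_inl]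
  have hsum_inr : ∀ j, (∑ i : Fin 5, alphaV i) (Sum.inr j) = 0 := by
    intro j
    simp [Finset.sum_apply, alphaV_inr]
  have hf1 : f ≠ (fun _ => 1) := by
    intro h
    refine hnesum (funext fun x => ?_)
    cases x with
    | inl a => rw [hsum_inl a]; exact congrFun h a
    | inr j => rw [hz j, hsum_inr j]
  -- rewrite LHS
  have hL : ∀ p : Fin 5 × Fin 2,
      (if μ ∈ Vij p.1 p.2 then (8 : ℕ) else 0)
        = if (if p.2 = 0 then f (p.1 + 3) = 0
            else f (p.1 + 4) + f (p.1 + 1) + f (p.1 + 3) = 0) then (8 : ℕ) else 0 := by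
    rintro ⟨i, j⟩
    refine if_congr ?_ rfl rfl
    fin_cases j
    · simp only [mem_Vij_iff]
      exact ⟨fun h => h.2, fun h => ⟨hz, h⟩⟩
    · simp only [mem_Vij_iff]
      constructor
      · intro h
        have := h.2
        rw [sub_one_eq] at this
        simpa using this
      · intro h
        refine ⟨hz, ?_⟩
        rw [sub_one_eq]
        simpa using h
  -- rewrite RHS condition
  have halpha1 : ∀ k a, alphaV k (Sum.inl a) = g1 k a := fun k a => alphaV_inl a k
  have hR : (∃ k : Fin 5, μ = alphaV k ∨ μ = alphaV k + alphaV (k + 2) ∨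
        μ = alphaV (k + 2) + alphaV (k + 3) + alphaV (k + 4))
      ↔ (∃ k : Fin 5, f = g1 k ∨ f = g2 k ∨ f = g3 k) := by
    refine exists_congr fun k => ?_
    refine or_congr ?_ (or_congr ?_ ?_)
    · rw [eq_iff_comp μ _ hz (fun j => alphaV_inr _ _)]
      constructor
      · intro h; funext a; rw [show f a = alphaV k (Sum.inl a) from congrFun h a, halpha1]
      · intro h; funext a
        show f a = _
        rw [congrFun h a, ← halpha1]
    · rw [eq_iff_comp μ _ hz (fun j => by simp [alphaV_inr])]
      constructor
      · intro h; funext a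
        rw [show f a = (alphaV k + alphaV (k+2)) (Sum.inl a) from congrFun h a]
        simp [g2, halpha1]
      · intro h; funext a
        show f a = _
        rw [congrFun h a]
        simp [g2, halpha1]
    · rw [eq_iff_comp μ _ hz (fun j => by simp [alphaV_inr])]
      constructor
      · intro h; funext a
        rw [show f a = (alphaV (k+2) + alphaV (k+3) + alphaV (k+4)) (Sum.inl a)
          from congrFun h a]
        simp [g3, halpha1]
      · intro h; funext a
        show f a = _
        rw [congrFun h a]
        simp [g3, halpha1]
  calc (∑ p : Fin 5 × Fin 2, if μ ∈ Vij p.1 p.2 then (8 : ℕ) else 0)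
      = (∑ p : Fin 5 × Fin 2, if (if p.2 = 0 then f (p.1 + 3) = 0
            else f (p.1 + 4) + f (p.1 + 1) + f (p.1 + 3) = 0) then (8 : ℕ) else 0) :=
        Finset.sum_congr rfl fun p _ => hL p
    _ = if (∃ k : Fin 5, f = g1 k ∨ f = g2 k ∨ f = g3 k) then 48 else 32 :=
        key f hf0 hf1
    _ = _ := by rw [if_congr hR.symm rfl rfl]
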